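/- Let (A,H,▶,ρ,χ,ψ) be a cocycle linked pair of cosemisimple bialgebras with normal integrals φ_A ∈ A^∨ and φ_H ∈ H^∨. Then the functional Φ on the cocycle bismash product A^ψ#_χH defined by Φ(a#x) = φ_A(a)φ_H(x) is a normal integral, and hence A^ψ#_χH is cosemisimple. -/

import Mathlib

open scoped TensorProduct
open Coalgebra

noncomputable section

/-- A Sweedler representation of the comultiplication of `x`:
`Δ x = ∑ᵢ x1 i ⊗ x2 i`. -/
def Rep2 {H : Type} [AddCommGroup H] [Module ℂ H] [Coalgebra ℂ H]
    {ι : Type} (x : H) (s : Finset ι) (x1 x2 : ι → H) : Prop :=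
  Coalgebra.comul (R := ℂ) x = ∑ i ∈ s, x1 i ⊗ₜ[ℂ] x2 i

/-- A representation of an element of a tensor product as a finite sum of pure tensors. -/
def TRep {M N : Type} [AddCommGroup M] [Module ℂ M] [AddCommGroup N] [Module ℂ N]
    {ι : Type} (w : M ⊗[ℂ] N) (s : Finset ι) (p : ι → M) (q : ι → N) : Prop :=
  w = ∑ i ∈ s, p i ⊗ₜ[ℂ] q i

/-- The iterated comultiplication `x ↦ ∑ (x₁ ⊗ x₂) ⊗ x₃`. -/
def comul3 (H : Type) [AddCommGroup H] [Module ℂ H] [Coalgebra ℂ H] :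
    H →ₗ[ℂ] (H ⊗[ℂ] H) ⊗[ℂ] H :=
  (LinearMap.rTensor H (Coalgebra.comul (R := ℂ))) ∘ₗ Coalgebra.comul (R := ℂ)

/-- The iterated comultiplication with four output legs. -/
def comul4 (H : Type) [AddCommGroup H] [Module ℂ H] [Coalgebra ℂ H] :
    H →ₗ[ℂ] ((H ⊗[ℂ] H) ⊗[ℂ] H) ⊗[ℂ] H :=
  (LinearMap.rTensor H (comul3 H)) ∘ₗ Coalgebra.comul (R := ℂ)

/-- The iterated comultiplication with five output legs. -/
def comul5 (H : Type) [AddCommGroup H] [Module ℂ H] [Coalgebra ℂ H] :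
    H →ₗ[ℂ] (((H ⊗[ℂ] H) ⊗[ℂ] H) ⊗[ℂ] H) ⊗[ℂ] H :=
  (LinearMap.rTensor H (comul4 H)) ∘ₗ Coalgebra.comul (R := ℂ)

/-- The iterated comultiplication with six output legs. -/
def comul6 (H : Type) [AddCommGroup H] [Module ℂ H] [Coalgebra ℂ H] :
    H →ₗ[ℂ] ((((H ⊗[ℂ] H) ⊗[ℂ] H) ⊗[ℂ] H) ⊗[ℂ] H) ⊗[ℂ] H :=
  (LinearMap.rTensor H (comul5 H)) ∘ₗ Coalgebra.comul (R := ℂ)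

/-- A `*`-structure on a Hopf algebra over `ℂ`: a conjugate-linear involution which is
antimultiplicative and comultiplicative.  Together with the Hopf algebra this is the data of
a `*`-Hopf algebra. -/
structure StarHopf (H : Type) [Ring H] [HopfAlgebra ℂ H] : Type where
  st : H → H
  st_add : ∀ x y : H, st (x + y) = st x + st y
  st_smul : ∀ (c : ℂ) (x : H), st (c • x) = (starRingEnd ℂ) c • st x
  st_invol : ∀ x : H, st (st x) = x
  st_antimul : ∀ x y : H, st (x * y) = st y * st x
  st_comul : ∀ (x : H) {ι : Type} (s : Finset ι) (x1 x2 : ι → H),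
      Rep2 x s x1 x2 →
      Coalgebra.comul (R := ℂ) (st x) = ∑ i ∈ s, st (x1 i) ⊗ₜ[ℂ] st (x2 i)

/-- A right comodule over a Hopf algebra. -/
structure RightComodule (H : Type) [Ring H] [HopfAlgebra ℂ H]
    (V : Type) [AddCommGroup V] [Module ℂ V] : Type where
  ρ : V →ₗ[ℂ] V ⊗[ℂ] H
  counit_cond : ∀ v : V, (TensorProduct.rid ℂ V)
      ((LinearMap.lTensor V (Coalgebra.counit (R := ℂ))) (ρ v)) = v
  coassoc_cond : ∀ v : V, (LinearMap.rTensor H ρ) (ρ v)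
      = (TensorProduct.assoc ℂ V H H).symm
          ((LinearMap.lTensor V (Coalgebra.comul (R := ℂ))) (ρ v))

/-- An inner product: sesquilinear (linear in the first variable), conjugate-symmetric and
positive definite. -/
structure IsInner {V : Type} [AddCommGroup V] [Module ℂ V] (ip : V → V → ℂ) : Prop where
  add_left : ∀ u u' v : V, ip (u + u') v = ip u v + ip u' v
  smul_left : ∀ (c : ℂ) (u v : V), ip (c • u) v = c * ip u v
  conj_symm : ∀ u v : V, ip v u = (starRingEnd ℂ) (ip u v)
  pos_def : ∀ v : V, v ≠ 0 → 0 < (ip v v).re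

/-- The invariance condition `∑ ⟨u₀,v⟩ S(u₁) = ∑ ⟨u,v₀⟩ v₁*` for a sesquilinear form on a
right comodule. -/
def RInvariant {H : Type} [Ring H] [HopfAlgebra ℂ H] (σ : StarHopf H)
    {V : Type} [AddCommGroup V] [Module ℂ V] (c : RightComodule H V)
    (ip : V → V → ℂ) : Prop :=
  ∀ (u v : V) {ι κ : Type} (s : Finset ι) (t : Finset κ)
    (u0 : ι → V) (u1 : ι → H) (v0 : κ → V) (v1 : κ → H),
    TRep (c.ρ u) s u0 u1 → TRep (c.ρ v) t v0 v1 →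
    ∑ i ∈ s, ip (u0 i) v • (HopfAlgebra.antipode (R := ℂ) (u1 i))
      = ∑ j ∈ t, ip u (v0 j) • σ.st (v1 j)

/-- A compact quantum group: a `*`-Hopf algebra such that every right comodule admits an
invariant inner product. -/
def IsCQG (H : Type) [Ring H] [HopfAlgebra ℂ H] (σ : StarHopf H) : Prop :=
  ∀ (V : Type) [AddCommGroup V] [Module ℂ V] (c : RightComodule H V),
    ∃ ip : V → V → ℂ, IsInner ip ∧ RInvariant σ c ip

/-- `φ` is a normal integral on the Hopf algebra `H` (a two-sided integral with `φ(1) = 1`);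
a Hopf algebra is cosemisimple iff it admits a normal integral. -/
def IsNormalIntegral (H : Type) [Ring H] [HopfAlgebra ℂ H] (φ : H →ₗ[ℂ] ℂ) : Prop :=
  φ 1 = 1 ∧
  (∀ (x : H) {ι : Type} (s : Finset ι) (x1 x2 : ι → H), Rep2 x s x1 x2 →
      ∑ i ∈ s, φ (x1 i) • x2 i = φ x • (1 : H)) ∧
  (∀ (x : H) {ι : Type} (s : Finset ι) (x1 x2 : ι → H), Rep2 x s x1 x2 →
      ∑ i ∈ s, φ (x2 i) • x1 i = φ x • (1 : H))

section CocycleLinkedPair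

variable (A H : Type) [Ring A] [HopfAlgebra ℂ A] [Ring H] [HopfAlgebra ℂ H]

/-- A cocycle linked pair of bialgebras/Hopf algebras `(A, H, ▶, ρ, χ, ψ)`, in the sense of
Andruskiewitsch–Devoto: `tri x a = x ▶ a` is a cocycle left `H`-module algebra structure on
`A` (with cocycle `chi = χ`), `rho = ρ : H → H ⊗ A` is a cocycle right `A`-comodule coalgebra
structure on `H` (with cococycle `psi = ψ`), subject to the compatibility relations
(c1)–(c8).  All Sweedler-type identities are expressed by quantifying over representations
of the relevant (iterated) comultiplications as finite sums of pure tensors. -/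
structure IsCocycleLinkedPair
    (tri : H →ₗ[ℂ] A →ₗ[ℂ] A) (rho : H →ₗ[ℂ] H ⊗[ℂ] A)
    (chi : H →ₗ[ℂ] H →ₗ[ℂ] A) (psi : H →ₗ[ℂ] A ⊗[ℂ] A) : Prop where
  -- (a1)–(a6): `(A, ▶, χ)` is a cocycle left `H`-module algebra
  a1 : ∀ x : H, tri x 1 = Coalgebra.counit (R := ℂ) x • (1 : A)
  a2 : ∀ (x : H) (a b : A) {ι : Type} (s : Finset ι) (x1 x2 : ι → H),
      Rep2 x s x1 x2 → tri x (a * b) = ∑ i ∈ s, tri (x1 i) a * tri (x2 i) b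
  a3 : ∀ a : A, tri 1 a = a
  a4 : ∀ (x y : H) (a : A) {ι κ : Type} (s : Finset ι) (t : Finset κ)
      (x1 x2 : ι → H) (y1 y2 : κ → H), Rep2 x s x1 x2 → Rep2 y t y1 y2 →
      ∑ i ∈ s, ∑ j ∈ t, tri (x1 i) (tri (y1 j) a) * chi (x2 i) (y2 j)
        = ∑ i ∈ s, ∑ j ∈ t, chi (x1 i) (y1 j) * tri (x2 i * y2 j) a
  a5 : ∀ (x y z : H) {ι κ μ : Type} (s : Finset ι) (t : Finset κ) (u : Finset μ)
      (x1 x2 : ι → H) (y1 y2 : κ → H) (z1 z2 : μ → H),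
      Rep2 x s x1 x2 → Rep2 y t y1 y2 → Rep2 z u z1 z2 →
      ∑ i ∈ s, ∑ j ∈ t, ∑ k ∈ u,
          tri (x1 i) (chi (y1 j) (z1 k)) * chi (x2 i) (y2 j * z2 k)
        = ∑ i ∈ s, ∑ j ∈ t, chi (x1 i) (y1 j) * chi (x2 i * y2 j) z
  a6 : ∀ x : H, chi x 1 = Coalgebra.counit (R := ℂ) x • (1 : A)
      ∧ chi 1 x = Coalgebra.counit (R := ℂ) x • (1 : A)
  -- (b1)–(b6): `(H, ρ, ψ)` is a cocycle right `A`-comodule coalgebra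
  b1 : ∀ (x : H) {ι : Type} (s : Finset ι) (h : ι → H) (c : ι → A),
      TRep (rho x) s h c →
      ∑ i ∈ s, Coalgebra.counit (R := ℂ) (h i) • c i
        = Coalgebra.counit (R := ℂ) x • (1 : A)
  b2 : ∀ (x : H) {ι : Type} (s : Finset ι) (g k : ι → H) (c d : ι → A),
      (TensorProduct.map rho rho) (Coalgebra.comul (R := ℂ) x)
        = ∑ i ∈ s, (g i ⊗ₜ[ℂ] c i) ⊗ₜ[ℂ] (k i ⊗ₜ[ℂ] d i) →
      (LinearMap.rTensor A (Coalgebra.comul (R := ℂ))) (rho x)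
        = ∑ i ∈ s, (g i ⊗ₜ[ℂ] k i) ⊗ₜ[ℂ] (c i * d i)
  b3 : ∀ (x : H) {ι : Type} (s : Finset ι) (h : ι → H) (c : ι → A),
      TRep (rho x) s h c → ∑ i ∈ s, Coalgebra.counit (R := ℂ) (c i) • h i = x
  b4 : ∀ (x : H) {ι κ : Type} (s : Finset ι) (t : Finset κ)
      (u v : ι → A) (h : ι → H) (a b : ι → A)
      (g : κ → H) (c d : κ → A) (p q : κ → A),
      (TensorProduct.map psi ((LinearMap.rTensor A rho) ∘ₗ rho))
          (Coalgebra.comul (R := ℂ) x)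
        = ∑ i ∈ s, (u i ⊗ₜ[ℂ] v i) ⊗ₜ[ℂ] ((h i ⊗ₜ[ℂ] a i) ⊗ₜ[ℂ] b i) →
      (TensorProduct.map
            ((LinearMap.lTensor H (Coalgebra.comul (R := ℂ) : A →ₗ[ℂ] A ⊗[ℂ] A)) ∘ₗ rho)
            psi)
          (Coalgebra.comul (R := ℂ) x)
        = ∑ j ∈ t, (g j ⊗ₜ[ℂ] (c j ⊗ₜ[ℂ] d j)) ⊗ₜ[ℂ] (p j ⊗ₜ[ℂ] q j) →
      ∑ i ∈ s, (h i ⊗ₜ[ℂ] (u i * a i)) ⊗ₜ[ℂ] (v i * b i)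
        = ∑ j ∈ t, (g j ⊗ₜ[ℂ] (c j * p j)) ⊗ₜ[ℂ] (d j * q j)
  b5 : ∀ (x : H) {ι κ : Type} (s : Finset ι) (t : Finset κ)
      (p q r : ι → A) (u v w : ι → A)
      (a : κ → A) (b c : κ → A) (d f : κ → A),
      (TensorProduct.map
            ((LinearMap.rTensor A (Coalgebra.comul (R := ℂ) : A →ₗ[ℂ] A ⊗[ℂ] A)) ∘ₗ psi)
            ((LinearMap.rTensor A psi) ∘ₗ rho))
          (Coalgebra.comul (R := ℂ) x)
        = ∑ i ∈ s, ((p i ⊗ₜ[ℂ] q i) ⊗ₜ[ℂ] r i) ⊗ₜ[ℂ] ((u i ⊗ₜ[ℂ] v i) ⊗ₜ[ℂ] w i) →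
      (TensorProduct.map
            ((LinearMap.lTensor A (Coalgebra.comul (R := ℂ) : A →ₗ[ℂ] A ⊗[ℂ] A)) ∘ₗ psi)
            psi)
          (Coalgebra.comul (R := ℂ) x)
        = ∑ j ∈ t, (a j ⊗ₜ[ℂ] (b j ⊗ₜ[ℂ] c j)) ⊗ₜ[ℂ] (d j ⊗ₜ[ℂ] f j) →
      ∑ i ∈ s, ((p i * u i) ⊗ₜ[ℂ] (q i * v i)) ⊗ₜ[ℂ] (r i * w i)
        = ∑ j ∈ t, (a j ⊗ₜ[ℂ] (b j * d j)) ⊗ₜ[ℂ] (c j * f j)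
  b6 : ∀ (x : H) {ι : Type} (s : Finset ι) (u v : ι → A),
      TRep (psi x) s u v →
      (∑ i ∈ s, Coalgebra.counit (R := ℂ) (u i) • v i
          = Coalgebra.counit (R := ℂ) x • (1 : A))
      ∧ (∑ i ∈ s, Coalgebra.counit (R := ℂ) (v i) • u i
          = Coalgebra.counit (R := ℂ) x • (1 : A))
  -- (c1)–(c8): the compatibility relations
  c1 : ∀ (x : H) (a : A), Coalgebra.counit (R := ℂ) (tri x a)
      = Coalgebra.counit (R := ℂ) x * Coalgebra.counit (R := ℂ) a
  c2 : rho 1 = (1 : H) ⊗ₜ[ℂ] (1 : A)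
  c3 : ∀ x y : H, Coalgebra.counit (R := ℂ) (chi x y)
      = Coalgebra.counit (R := ℂ) x * Coalgebra.counit (R := ℂ) y
  c4 : psi 1 = (1 : A) ⊗ₜ[ℂ] (1 : A)
  c5 : ∀ (x : H) (a : A) {ι κ : Type} (s : Finset ι) (t : Finset κ)
      (p q u v : ι → A)
      (pp qq : κ → A) (hh : κ → H) (rr : κ → A) (kk : κ → H) (aa bb : κ → A),
      (TensorProduct.map
            ((Coalgebra.comul (R := ℂ) : A →ₗ[ℂ] A ⊗[ℂ] A) ∘ₗ (TensorProduct.lift tri))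
            psi)
          ((LinearMap.rTensor H ((TensorProduct.mk ℂ H A).flip a))
            (Coalgebra.comul (R := ℂ) x))
        = ∑ i ∈ s, (p i ⊗ₜ[ℂ] q i) ⊗ₜ[ℂ] (u i ⊗ₜ[ℂ] v i) →
      (TensorProduct.map
            (TensorProduct.map (TensorProduct.map psi rho) (LinearMap.id : H →ₗ[ℂ] H))
            (LinearMap.id : A ⊗[ℂ] A →ₗ[ℂ] A ⊗[ℂ] A))
          ((comul3 H x) ⊗ₜ[ℂ] (Coalgebra.comul (R := ℂ) a))
        = ∑ j ∈ t, ((((pp j ⊗ₜ[ℂ] qq j) ⊗ₜ[ℂ] (hh j ⊗ₜ[ℂ] rr j)) ⊗ₜ[ℂ] kk j)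
            ⊗ₜ[ℂ] (aa j ⊗ₜ[ℂ] bb j)) →
      ∑ i ∈ s, (p i * u i) ⊗ₜ[ℂ] (q i * v i)
        = ∑ j ∈ t, (pp j * tri (hh j) (aa j))
            ⊗ₜ[ℂ] (qq j * rr j * tri (kk j) (bb j))
  c6 : ∀ (x y : H) {ι κ : Type} (s : Finset ι) (t : Finset κ)
      (uu : ι → A) (hh : ι → H) (aa : ι → A)
      (g : κ → H) (c : κ → A) (u2 v2 : κ → H) (k : κ → H) (d : κ → A) (w : κ → H),
      (TensorProduct.map (TensorProduct.lift chi) (rho ∘ₗ (LinearMap.mul' ℂ H)))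
          ((TensorProduct.tensorTensorTensorComm ℂ H H H H)
            ((Coalgebra.comul (R := ℂ) x) ⊗ₜ[ℂ] (Coalgebra.comul (R := ℂ) y)))
        = ∑ i ∈ s, uu i ⊗ₜ[ℂ] (hh i ⊗ₜ[ℂ] aa i) →
      (TensorProduct.map
            (TensorProduct.map (TensorProduct.map rho (LinearMap.id : H →ₗ[ℂ] H))
              (LinearMap.id : H →ₗ[ℂ] H))
            (TensorProduct.map rho (LinearMap.id : H →ₗ[ℂ] H)))
          ((comul3 H x) ⊗ₜ[ℂ] (Coalgebra.comul (R := ℂ) y))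
        = ∑ j ∈ t, (((g j ⊗ₜ[ℂ] c j) ⊗ₜ[ℂ] u2 j) ⊗ₜ[ℂ] v2 j)
            ⊗ₜ[ℂ] ((k j ⊗ₜ[ℂ] d j) ⊗ₜ[ℂ] w j) →
      ∑ i ∈ s, hh i ⊗ₜ[ℂ] (uu i * aa i)
        = ∑ j ∈ t, (g j * k j) ⊗ₜ[ℂ] (c j * tri (u2 j) (d j) * chi (v2 j) (w j))
  c7 : ∀ (x : H) (a : A) {ι κ : Type} (s : Finset ι) (t : Finset κ)
      (x1 : ι → H) (h : ι → H) (b : ι → A)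
      (g : κ → H) (c : κ → A) (x2 : κ → H),
      (LinearMap.lTensor H rho) (Coalgebra.comul (R := ℂ) x)
        = ∑ i ∈ s, x1 i ⊗ₜ[ℂ] (h i ⊗ₜ[ℂ] b i) →
      (LinearMap.rTensor H rho) (Coalgebra.comul (R := ℂ) x)
        = ∑ j ∈ t, (g j ⊗ₜ[ℂ] c j) ⊗ₜ[ℂ] x2 j →
      ∑ i ∈ s, h i ⊗ₜ[ℂ] (tri (x1 i) a * b i)
        = ∑ j ∈ t, g j ⊗ₜ[ℂ] (c j * tri (x2 j) a)
  c8 : ∀ (x y : H) {ι κ : Type} (s : Finset ι) (t : Finset κ)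
      (p q u v : ι → A)
      (pp qq : κ → A) (h1 : κ → H) (a1 : κ → A) (x3 : κ → H) (h2 : κ → H) (a2 : κ → A)
      (x5 x6 : κ → H) (uu vv : κ → A) (kk : κ → H) (bb : κ → A) (y3 : κ → H),
      (TensorProduct.map
            ((Coalgebra.comul (R := ℂ) : A →ₗ[ℂ] A ⊗[ℂ] A) ∘ₗ (TensorProduct.lift chi))
            (psi ∘ₗ (LinearMap.mul' ℂ H)))
          ((TensorProduct.tensorTensorTensorComm ℂ H H H H)
            ((Coalgebra.comul (R := ℂ) x) ⊗ₜ[ℂ] (Coalgebra.comul (R := ℂ) y)))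
        = ∑ i ∈ s, (p i ⊗ₜ[ℂ] q i) ⊗ₜ[ℂ] (u i ⊗ₜ[ℂ] v i) →
      ((TensorProduct.map
            (TensorProduct.map
              (TensorProduct.map
                (TensorProduct.map (TensorProduct.map psi rho) (LinearMap.id : H →ₗ[ℂ] H))
                rho)
              (LinearMap.id : H →ₗ[ℂ] H))
            (LinearMap.id : H →ₗ[ℂ] H))
          (comul6 H x)) ⊗ₜ[ℂ]
        ((TensorProduct.map (TensorProduct.map psi rho) (LinearMap.id : H →ₗ[ℂ] H))
          (comul3 H y))
        = ∑ j ∈ t, ((((((pp j ⊗ₜ[ℂ] qq j) ⊗ₜ[ℂ] (h1 j ⊗ₜ[ℂ] a1 j)) ⊗ₜ[ℂ] x3 j)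
              ⊗ₜ[ℂ] (h2 j ⊗ₜ[ℂ] a2 j)) ⊗ₜ[ℂ] x5 j) ⊗ₜ[ℂ] x6 j)
            ⊗ₜ[ℂ] (((uu j ⊗ₜ[ℂ] vv j) ⊗ₜ[ℂ] (kk j ⊗ₜ[ℂ] bb j)) ⊗ₜ[ℂ] y3 j) →
      ∑ i ∈ s, (p i * u i) ⊗ₜ[ℂ] (q i * v i)
        = ∑ j ∈ t, (pp j * tri (h1 j) (uu j) * chi (h2 j) (kk j))
            ⊗ₜ[ℂ] (qq j * a1 j * tri (x3 j) (vv j) * a2 j * tri (x5 j) (bb j)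
                * chi (x6 j) (y3 j))

/-- `M`, identified with `A ⊗ H` via `e`, carries the Hopf algebra structure of the cocycle
bismash product `A^ψ #_χ H`. -/
structure IsCocycleBismash
    (tri : H →ₗ[ℂ] A →ₗ[ℂ] A) (rho : H →ₗ[ℂ] H ⊗[ℂ] A)
    (chi : H →ₗ[ℂ] H →ₗ[ℂ] A) (psi : H →ₗ[ℂ] A ⊗[ℂ] A)
    (M : Type) [Ring M] [HopfAlgebra ℂ M] (e : A ⊗[ℂ] H ≃ₗ[ℂ] M) : Prop where
  mul_def : ∀ (a b : A) (x y : H) {ι κ : Type} (s : Finset ι) (t : Finset κ)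
      (x1 x2 x3 : ι → H) (y1 y2 : κ → H),
      comul3 H x = ∑ i ∈ s, (x1 i ⊗ₜ[ℂ] x2 i) ⊗ₜ[ℂ] x3 i → Rep2 y t y1 y2 →
      e (a ⊗ₜ[ℂ] x) * e (b ⊗ₜ[ℂ] y)
        = ∑ i ∈ s, ∑ j ∈ t,
            e ((a * tri (x1 i) b * chi (x2 i) (y1 j)) ⊗ₜ[ℂ] (x3 i * y2 j))
  one_def : (1 : M) = e ((1 : A) ⊗ₜ[ℂ] (1 : H))
  comul_def : ∀ (a : A) (x : H) {ι κ : Type} (s : Finset ι) (t : Finset κ)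
      (a1 a2 : κ → A) (p q : ι → A) (g : ι → H) (c : ι → A) (u : ι → H),
      Rep2 a t a1 a2 →
      (TensorProduct.map (TensorProduct.map psi rho) (LinearMap.id : H →ₗ[ℂ] H))
          (comul3 H x)
        = ∑ i ∈ s, ((p i ⊗ₜ[ℂ] q i) ⊗ₜ[ℂ] (g i ⊗ₜ[ℂ] c i)) ⊗ₜ[ℂ] u i →
      Coalgebra.comul (R := ℂ) (e (a ⊗ₜ[ℂ] x))
        = ∑ j ∈ t, ∑ i ∈ s,
            e ((a1 j * p i) ⊗ₜ[ℂ] g i) ⊗ₜ[ℂ] e ((a2 j * q i * c i) ⊗ₜ[ℂ] u i)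
  counit_def : ∀ (a : A) (x : H),
      Coalgebra.counit (R := ℂ) (e (a ⊗ₜ[ℂ] x))
        = Coalgebra.counit (R := ℂ) a * Coalgebra.counit (R := ℂ) x

end CocycleLinkedPair

/-! ### Auxiliary general lemmas -/

set_option maxHeartbeats 1000000
set_option synthInstance.maxHeartbeats 400000

section CBAux

variable {B : Type} [Ring B] [HopfAlgebra ℂ B]

lemma CBAux.sum_counit_right_smul {ι : Type*} {m : B} (s : Finset ι) (f g : ι → B)
    (h : Coalgebra.comul (R := ℂ) m = ∑ i ∈ s, f i ⊗ₜ[ℂ] g i) :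
    ∑ i ∈ s, Coalgebra.counit (R := ℂ) (g i) • f i = m := by
  have h2 := congrArg (fun w => (TensorProduct.rid ℂ B)
    ((LinearMap.lTensor B (Coalgebra.counit (R := ℂ))) w)) h
  simpa [map_sum] using h2.symm

lemma CBAux.sum_counit_left_smul {ι : Type*} {m : B} (s : Finset ι) (f g : ι → B)
    (h : Coalgebra.comul (R := ℂ) m = ∑ i ∈ s, f i ⊗ₜ[ℂ] g i) :
    ∑ i ∈ s, Coalgebra.counit (R := ℂ) (f i) • g i = m := by
  have h2 := congrArg (fun w => (TensorProduct.lid ℂ B)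
    ((LinearMap.rTensor B (Coalgebra.counit (R := ℂ))) w)) h
  simpa [map_sum] using h2.symm

lemma CBAux.antipode_one' : HopfAlgebra.antipode (R := ℂ) (1 : B) = 1 := by
  have h := HopfAlgebra.mul_antipode_rTensor_comul_apply (R := ℂ) (a := (1 : B))
  rw [Bialgebra.comul_one] at h
  rw [Algebra.TensorProduct.one_def] at h
  simpa using h

lemma CBAux.fold_smul_map {V : Type*} [AddCommMonoid V] [Module ℂ V] {ι : Type*}
    (s : Finset ι) (c : ι → ℂ) (v : ι → B) (L : B →ₗ[ℂ] V) :
    ∑ i ∈ s, c i • L (v i) = L (∑ i ∈ s, c i • v i) := by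
  rw [map_sum]; exact Finset.sum_congr rfl fun i _ => (map_smul L _ _).symm

/-- The "flipped antipode" map `x ↦ ∑ S(x₂) ⊗ S(x₁)`. -/
def CBAux.gS : B →ₗ[ℂ] B ⊗[ℂ] B :=
  (TensorProduct.map (HopfAlgebra.antipode (R := ℂ)) (HopfAlgebra.antipode (R := ℂ)))
    ∘ₗ (TensorProduct.comm ℂ B B).toLinearMap ∘ₗ Coalgebra.comul (R := ℂ)

/-- `(Δ ∘ S) * Δ = ε` in the convolution algebra `Hom(B, B ⊗ B)`. -/
lemma CBAux.conv_aS_c {ι : Type*} {y : B} (s : Finset ι) (f g : ι → B)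
    (h : Coalgebra.comul (R := ℂ) y = ∑ i ∈ s, f i ⊗ₜ[ℂ] g i) :
    ∑ i ∈ s, (Coalgebra.comul (R := ℂ) (HopfAlgebra.antipode (R := ℂ) (f i))
        * Coalgebra.comul (R := ℂ) (g i) : B ⊗[ℂ] B)
      = Coalgebra.counit (R := ℂ) y • 1 := by
  have e1 : ∀ i ∈ s, (Coalgebra.comul (R := ℂ) (HopfAlgebra.antipode (R := ℂ) (f i))
        * Coalgebra.comul (R := ℂ) (g i) : B ⊗[ℂ] B)
      = Coalgebra.comul (R := ℂ) (HopfAlgebra.antipode (R := ℂ) (f i) * g i) := by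
    intro i _; rw [Bialgebra.comul_mul]
  rw [Finset.sum_congr rfl e1, ← map_sum,
    HopfAlgebra.sum_antipode_mul_eq_smul ⟨s, f, g, h.symm⟩, map_smul, Bialgebra.comul_one]

/-- `Δ * gS = ε` in the convolution algebra `Hom(B, B ⊗ B)`. -/
lemma CBAux.conv_c_gS {y : B} {ι : Type*} (s : Finset ι) (f g : ι → B)
    (h : Coalgebra.comul (R := ℂ) y = ∑ i ∈ s, f i ⊗ₜ[ℂ] g i) :
    ∑ i ∈ s, (Coalgebra.comul (R := ℂ) (f i) * CBAux.gS (g i) : B ⊗[ℂ] B)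
      = Coalgebra.counit (R := ℂ) y • 1 := by
  classical
  set S := HopfAlgebra.antipode (R := ℂ) (A := B) with hS
  set Ξ : B ⊗[ℂ] (B ⊗[ℂ] B) →ₗ[ℂ] B ⊗[ℂ] B :=
    (LinearMap.mul' ℂ (B ⊗[ℂ] B)) ∘ₗ
      (TensorProduct.map (Coalgebra.comul (R := ℂ))
        ((TensorProduct.map S S) ∘ₗ (TensorProduct.comm ℂ B B).toLinearMap)) with hΞ
  have Ξ_apply : ∀ (t : B) (zw : B ⊗[ℂ] B),
      Ξ (t ⊗ₜ[ℂ] zw) = Coalgebra.comul (R := ℂ) t *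
        ((TensorProduct.map S S) ((TensorProduct.comm ℂ B B) zw)) := by
    intro t zw; simp [hΞ, LinearMap.mul'_apply]
  have step1 : ∑ i ∈ s, (Coalgebra.comul (R := ℂ) (f i) * CBAux.gS (g i) : B ⊗[ℂ] B)
      = Ξ ((LinearMap.lTensor B (Coalgebra.comul (R := ℂ)))
          (Coalgebra.comul (R := ℂ) y)) := by
    rw [h, map_sum, map_sum]
    refine Finset.sum_congr rfl fun i _ => ?_
    rw [LinearMap.lTensor_tmul, Ξ_apply]
    rfl
  have rf : ∀ i, Coalgebra.Repr ℂ (f i) (B × B) := fun i => ℛ ℂ (f i)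
  have step3 : (LinearMap.rTensor B (Coalgebra.comul (R := ℂ)))
        (Coalgebra.comul (R := ℂ) y)
      = ∑ i ∈ s, ∑ k ∈ (rf i).index,
          ((rf i).left k ⊗ₜ[ℂ] (rf i).right k) ⊗ₜ[ℂ] g i := by
    rw [h, map_sum]
    refine Finset.sum_congr rfl fun i _ => ?_
    rw [LinearMap.rTensor_tmul, ← (rf i).eq, TensorProduct.sum_tmul]
  have step4 : ∑ i ∈ s, (Coalgebra.comul (R := ℂ) (f i) * CBAux.gS (g i) : B ⊗[ℂ] B)
      = ∑ i ∈ s, ∑ k ∈ (rf i).index,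
          (Coalgebra.comul (R := ℂ) ((rf i).left k)
            * (S (g i) ⊗ₜ[ℂ] S ((rf i).right k)) : B ⊗[ℂ] B) := by
    rw [step1, ← Coalgebra.coassoc_apply y, step3, map_sum, map_sum]
    refine Finset.sum_congr rfl fun i _ => ?_
    rw [map_sum, map_sum]
    refine Finset.sum_congr rfl fun k _ => ?_
    rw [TensorProduct.assoc_tmul, Ξ_apply, TensorProduct.comm_tmul, TensorProduct.map_tmul]
  have step5 : ∀ i ∈ s, ∑ k ∈ (rf i).index,
        (Coalgebra.comul (R := ℂ) ((rf i).left k)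
          * (S (g i) ⊗ₜ[ℂ] S ((rf i).right k)) : B ⊗[ℂ] B)
      = (f i * S (g i)) ⊗ₜ[ℂ] 1 := by
    intro i _
    set Ξ2 : (B ⊗[ℂ] B) ⊗[ℂ] B →ₗ[ℂ] B ⊗[ℂ] B :=
      (LinearMap.mul' ℂ (B ⊗[ℂ] B)) ∘ₗ
        (TensorProduct.map (LinearMap.id (R := ℂ) (M := B ⊗[ℂ] B))
          ((TensorProduct.mk ℂ B B (S (g i))) ∘ₗ S)) with hΞ2
    have Ξ2_apply : ∀ (zw : B ⊗[ℂ] B) (b : B),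
        Ξ2 (zw ⊗ₜ[ℂ] b) = zw * (S (g i) ⊗ₜ[ℂ] S b) := by
      intro zw b; simp [hΞ2, LinearMap.mul'_apply]
    have e1 : ∑ k ∈ (rf i).index,
          (Coalgebra.comul (R := ℂ) ((rf i).left k)
            * (S (g i) ⊗ₜ[ℂ] S ((rf i).right k)) : B ⊗[ℂ] B)
        = Ξ2 ((LinearMap.rTensor B (Coalgebra.comul (R := ℂ)))
            (Coalgebra.comul (R := ℂ) (f i))) := by
      rw [← (rf i).eq, map_sum, map_sum]
      refine Finset.sum_congr rfl fun k _ => ?_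
      rw [LinearMap.rTensor_tmul, Ξ2_apply]
    rw [e1, ← Coalgebra.coassoc_symm_apply (f i), ← (rf i).eq]
    have rb : ∀ k, Coalgebra.Repr ℂ ((rf i).right k) (B × B) := fun k => ℛ ℂ ((rf i).right k)
    have e2 : (LinearMap.lTensor B (Coalgebra.comul (R := ℂ)))
          (∑ k ∈ (rf i).index, (rf i).left k ⊗ₜ[ℂ] (rf i).right k)
        = ∑ k ∈ (rf i).index, ∑ n ∈ (rb k).index,
            (rf i).left k ⊗ₜ[ℂ] ((rb k).left n ⊗ₜ[ℂ] (rb k).right n) := by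
      rw [map_sum]
      refine Finset.sum_congr rfl fun k _ => ?_
      rw [LinearMap.lTensor_tmul, ← (rb k).eq, TensorProduct.tmul_sum]
    rw [e2, map_sum, map_sum]
    have e3 : ∀ k ∈ (rf i).index,
        Ξ2 ((TensorProduct.assoc ℂ B B B).symm
          (∑ n ∈ (rb k).index,
            (rf i).left k ⊗ₜ[ℂ] ((rb k).left n ⊗ₜ[ℂ] (rb k).right n)))
        = Coalgebra.counit (R := ℂ) ((rf i).right k) •
            (((rf i).left k * S (g i)) ⊗ₜ[ℂ] (1 : B)) := by
      intro k _
      rw [map_sum, map_sum]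
      have e4 : ∀ n ∈ (rb k).index,
          Ξ2 ((TensorProduct.assoc ℂ B B B).symm
            ((rf i).left k ⊗ₜ[ℂ] ((rb k).left n ⊗ₜ[ℂ] (rb k).right n)))
          = ((rf i).left k * S (g i)) ⊗ₜ[ℂ] ((rb k).left n * S ((rb k).right n)) := by
        intro n _
        rw [TensorProduct.assoc_symm_tmul, Ξ2_apply, Algebra.TensorProduct.tmul_mul_tmul]
      rw [Finset.sum_congr rfl e4, ← TensorProduct.tmul_sum,
        HopfAlgebra.sum_mul_antipode_eq_smul (rb k), TensorProduct.tmul_smul]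
    rw [Finset.sum_congr rfl e3]
    have e5 : ∑ k ∈ (rf i).index, Coalgebra.counit (R := ℂ) ((rf i).right k) •
          (((rf i).left k * S (g i)) ⊗ₜ[ℂ] (1 : B))
        = ((∑ k ∈ (rf i).index, Coalgebra.counit (R := ℂ) ((rf i).right k) • (rf i).left k)
            * S (g i)) ⊗ₜ[ℂ] (1 : B) := by
      rw [Finset.sum_mul, TensorProduct.sum_tmul]
      refine Finset.sum_congr rfl fun k _ => ?_
      rw [smul_mul_assoc, TensorProduct.smul_tmul']
    rw [e5, CBAux.sum_counit_right_smul _ _ _ ((rf i).eq.symm)]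
  calc ∑ i ∈ s, (Coalgebra.comul (R := ℂ) (f i) * CBAux.gS (g i) : B ⊗[ℂ] B)
      = ∑ i ∈ s, (f i * S (g i)) ⊗ₜ[ℂ] (1 : B) := by
        rw [step4]; exact Finset.sum_congr rfl step5
    _ = (∑ i ∈ s, f i * S (g i)) ⊗ₜ[ℂ] (1 : B) := by rw [TensorProduct.sum_tmul]
    _ = Coalgebra.counit (R := ℂ) y • 1 := by
        rw [HopfAlgebra.sum_mul_antipode_eq_smul ⟨s, f, g, h.symm⟩,
          ← TensorProduct.smul_tmul', Algebra.TensorProduct.one_def]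

/-- The antipode is an anti-morphism of coalgebras: `Δ(S x) = ∑ S(x₂) ⊗ S(x₁)`. -/
theorem CBAux.comul_antipode' (x : B) :
    Coalgebra.comul (R := ℂ) (HopfAlgebra.antipode (R := ℂ) x) = CBAux.gS x := by
  classical
  set S := HopfAlgebra.antipode (R := ℂ) (A := B) with hS
  set Θ : (B ⊗[ℂ] B) ⊗[ℂ] B →ₗ[ℂ] B ⊗[ℂ] B :=
    (LinearMap.mul' ℂ (B ⊗[ℂ] B)) ∘ₗ
      (TensorProduct.map
        ((LinearMap.mul' ℂ (B ⊗[ℂ] B)) ∘ₗ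
          (TensorProduct.map ((Coalgebra.comul (R := ℂ)) ∘ₗ S) (Coalgebra.comul (R := ℂ))))
        CBAux.gS) with hΘ
  have Θ_apply : ∀ (t z w : B),
      Θ ((t ⊗ₜ[ℂ] z) ⊗ₜ[ℂ] w)
        = (Coalgebra.comul (R := ℂ) (S t) * Coalgebra.comul (R := ℂ) z) * CBAux.gS w := by
    intro t z w; simp [hΘ, LinearMap.mul'_apply]
  have rx : Coalgebra.Repr ℂ x (B × B) := ℛ ℂ x
  have ru : ∀ i, Coalgebra.Repr ℂ (rx.left i) (B × B) := fun i => ℛ ℂ (rx.left i)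
  have rv : ∀ i, Coalgebra.Repr ℂ (rx.right i) (B × B) := fun i => ℛ ℂ (rx.right i)
  have exp1 : (LinearMap.rTensor B (Coalgebra.comul (R := ℂ)))
        (Coalgebra.comul (R := ℂ) x)
      = ∑ i ∈ rx.index, ∑ k ∈ (ru i).index,
          ((ru i).left k ⊗ₜ[ℂ] (ru i).right k) ⊗ₜ[ℂ] rx.right i := by
    rw [← rx.eq, map_sum]
    refine Finset.sum_congr rfl fun i _ => ?_
    rw [LinearMap.rTensor_tmul, ← (ru i).eq, TensorProduct.sum_tmul]
  have exp2 : (LinearMap.rTensor B (Coalgebra.comul (R := ℂ)))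
        (Coalgebra.comul (R := ℂ) x)
      = ∑ i ∈ rx.index, ∑ j ∈ (rv i).index,
          (rx.left i ⊗ₜ[ℂ] (rv i).left j) ⊗ₜ[ℂ] (rv i).right j := by
    rw [← Coalgebra.coassoc_symm_apply x, ← rx.eq, map_sum, map_sum]
    refine Finset.sum_congr rfl fun i _ => ?_
    rw [LinearMap.lTensor_tmul, ← (rv i).eq, TensorProduct.tmul_sum, map_sum]
    refine Finset.sum_congr rfl fun j _ => ?_
    rw [TensorProduct.assoc_symm_tmul]
  have eval1 : Θ ((LinearMap.rTensor B (Coalgebra.comul (R := ℂ)))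
        (Coalgebra.comul (R := ℂ) x)) = CBAux.gS x := by
    rw [exp1, map_sum]
    have e1 : ∀ i ∈ rx.index,
        Θ (∑ k ∈ (ru i).index, ((ru i).left k ⊗ₜ[ℂ] (ru i).right k) ⊗ₜ[ℂ] rx.right i)
        = Coalgebra.counit (R := ℂ) (rx.left i) • CBAux.gS (rx.right i) := by
      intro i _
      rw [map_sum]
      have e2 : ∀ k ∈ (ru i).index,
          Θ (((ru i).left k ⊗ₜ[ℂ] (ru i).right k) ⊗ₜ[ℂ] rx.right i)
          = (Coalgebra.comul (R := ℂ) (S ((ru i).left k))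
              * Coalgebra.comul (R := ℂ) ((ru i).right k)) * CBAux.gS (rx.right i) :=
        fun k _ => Θ_apply _ _ _
      rw [Finset.sum_congr rfl e2, ← Finset.sum_mul,
        CBAux.conv_aS_c _ _ _ ((ru i).eq.symm), smul_mul_assoc, one_mul]
    rw [Finset.sum_congr rfl e1, CBAux.fold_smul_map,
      CBAux.sum_counit_left_smul _ _ _ rx.eq.symm]
  have eval2 : Θ ((LinearMap.rTensor B (Coalgebra.comul (R := ℂ)))
        (Coalgebra.comul (R := ℂ) x))
      = Coalgebra.comul (R := ℂ) (S x) := by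
    rw [exp2, map_sum]
    have e1 : ∀ i ∈ rx.index,
        Θ (∑ j ∈ (rv i).index, (rx.left i ⊗ₜ[ℂ] (rv i).left j) ⊗ₜ[ℂ] (rv i).right j)
        = Coalgebra.counit (R := ℂ) (rx.right i) • Coalgebra.comul (R := ℂ) (S (rx.left i)) := by
      intro i _
      rw [map_sum]
      have e2 : ∀ j ∈ (rv i).index,
          Θ ((rx.left i ⊗ₜ[ℂ] (rv i).left j) ⊗ₜ[ℂ] (rv i).right j)
          = Coalgebra.comul (R := ℂ) (S (rx.left i)) *
              (Coalgebra.comul (R := ℂ) ((rv i).left j) * CBAux.gS ((rv i).right j)) := by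
        intro j _; rw [Θ_apply, mul_assoc]
      rw [Finset.sum_congr rfl e2, ← Finset.mul_sum,
        CBAux.conv_c_gS _ _ _ ((rv i).eq.symm), mul_smul_comm, mul_one]
    have e3 : ∀ i ∈ rx.index, Coalgebra.counit (R := ℂ) (rx.right i) •
          Coalgebra.comul (R := ℂ) (S (rx.left i))
        = Coalgebra.counit (R := ℂ) (rx.right i) •
            ((Coalgebra.comul (R := ℂ) ∘ₗ S) (rx.left i)) := fun i _ => rfl
    rw [Finset.sum_congr rfl e1, Finset.sum_congr rfl e3, CBAux.fold_smul_map,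
      CBAux.sum_counit_right_smul _ _ _ rx.eq.symm, LinearMap.comp_apply]
  rw [← eval2, eval1]

/-- If `Φ` is a right integral on a Hopf algebra, then `Φ ∘ S` is a left integral. -/
lemma CBAux.left_int_of_right_int (Φ : B →ₗ[ℂ] ℂ)
    (hr : ∀ (m : B) {ι : Type} (s : Finset ι) (f g : ι → B),
      Coalgebra.comul (R := ℂ) m = ∑ i ∈ s, f i ⊗ₜ[ℂ] g i →
      ∑ i ∈ s, Φ (g i) • f i = Φ m • (1 : B))
    (m : B) {ι : Type} (s : Finset ι) (f g : ι → B)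
    (h : Coalgebra.comul (R := ℂ) m = ∑ i ∈ s, f i ⊗ₜ[ℂ] g i) :
    ∑ i ∈ s, Φ (HopfAlgebra.antipode (R := ℂ) (f i)) • g i
      = Φ (HopfAlgebra.antipode (R := ℂ) m) • (1 : B) := by
  classical
  set S := HopfAlgebra.antipode (R := ℂ) (A := B) with hS
  set D : B ⊗[ℂ] B →ₗ[ℂ] B :=
    (TensorProduct.lid ℂ B).toLinearMap ∘ₗ (LinearMap.rTensor B (Φ ∘ₗ S))
      ∘ₗ (LinearMap.lTensor B S) with hD
  have D_apply : ∀ (t z : B), D (t ⊗ₜ[ℂ] z) = Φ (S t) • S z := by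
    intro t z; simp [hD]
  set Θ : (B ⊗[ℂ] B) ⊗[ℂ] B →ₗ[ℂ] B :=
    (LinearMap.mul' ℂ B) ∘ₗ (LinearMap.rTensor B D) with hΘ
  have Θ_apply : ∀ (t z w : B), Θ ((t ⊗ₜ[ℂ] z) ⊗ₜ[ℂ] w) = (Φ (S t) • S z) * w := by
    intro t z w
    simp only [hΘ, LinearMap.comp_apply, LinearMap.rTensor_tmul, LinearMap.mul'_apply]
    rw [D_apply]
  have rf : ∀ i, Coalgebra.Repr ℂ (f i) (B × B) := fun i => ℛ ℂ (f i)
  have rg : ∀ i, Coalgebra.Repr ℂ (g i) (B × B) := fun i => ℛ ℂ (g i)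
  have exp1 : (LinearMap.rTensor B (Coalgebra.comul (R := ℂ)))
        (Coalgebra.comul (R := ℂ) m)
      = ∑ i ∈ s, ∑ k ∈ (rf i).index,
          ((rf i).left k ⊗ₜ[ℂ] (rf i).right k) ⊗ₜ[ℂ] g i := by
    rw [h, map_sum]
    refine Finset.sum_congr rfl fun i _ => ?_
    rw [LinearMap.rTensor_tmul, ← (rf i).eq, TensorProduct.sum_tmul]
  have exp2 : (LinearMap.rTensor B (Coalgebra.comul (R := ℂ)))
        (Coalgebra.comul (R := ℂ) m)
      = ∑ i ∈ s, ∑ j ∈ (rg i).index,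
          (f i ⊗ₜ[ℂ] (rg i).left j) ⊗ₜ[ℂ] (rg i).right j := by
    rw [← Coalgebra.coassoc_symm_apply m, h, map_sum, map_sum]
    refine Finset.sum_congr rfl fun i _ => ?_
    rw [LinearMap.lTensor_tmul, ← (rg i).eq, TensorProduct.tmul_sum, map_sum]
    refine Finset.sum_congr rfl fun j _ => ?_
    rw [TensorProduct.assoc_symm_tmul]
  have eval1 : Θ ((LinearMap.rTensor B (Coalgebra.comul (R := ℂ)))
        (Coalgebra.comul (R := ℂ) m))
      = ∑ i ∈ s, Φ (S (f i)) • g i := by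
    rw [exp1, map_sum]
    refine Finset.sum_congr rfl fun i _ => ?_
    rw [map_sum]
    have e2 : ∀ k ∈ (rf i).index,
        Θ (((rf i).left k ⊗ₜ[ℂ] (rf i).right k) ⊗ₜ[ℂ] g i)
        = (Φ (S ((rf i).left k)) • S ((rf i).right k)) * g i := fun k _ => Θ_apply _ _ _
    rw [Finset.sum_congr rfl e2, ← Finset.sum_mul]
    have hrep : Coalgebra.comul (R := ℂ) (S (f i))
        = ∑ k ∈ (rf i).index, S ((rf i).right k) ⊗ₜ[ℂ] S ((rf i).left k) := by
      rw [CBAux.comul_antipode']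
      show (TensorProduct.map S S) ((TensorProduct.comm ℂ B B)
        (Coalgebra.comul (R := ℂ) (f i))) = _
      rw [← (rf i).eq, map_sum, map_sum]
      refine Finset.sum_congr rfl fun k _ => ?_
      rw [TensorProduct.comm_tmul, TensorProduct.map_tmul]
    have := hr (S (f i)) (rf i).index (fun k => S ((rf i).right k))
      (fun k => S ((rf i).left k)) hrep
    rw [this, smul_mul_assoc, one_mul]
  have eval2 : Θ ((LinearMap.rTensor B (Coalgebra.comul (R := ℂ)))
        (Coalgebra.comul (R := ℂ) m))
      = Φ (S m) • (1 : B) := by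
    rw [exp2, map_sum]
    have e1 : ∀ i ∈ s,
        Θ (∑ j ∈ (rg i).index, (f i ⊗ₜ[ℂ] (rg i).left j) ⊗ₜ[ℂ] (rg i).right j)
        = (Φ (S (f i)) * Coalgebra.counit (R := ℂ) (g i)) • (1 : B) := by
      intro i _
      rw [map_sum]
      have e2 : ∀ j ∈ (rg i).index,
          Θ ((f i ⊗ₜ[ℂ] (rg i).left j) ⊗ₜ[ℂ] (rg i).right j)
          = Φ (S (f i)) • (S ((rg i).left j) * (rg i).right j) := by
        intro j _; rw [Θ_apply, smul_mul_assoc]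
      rw [Finset.sum_congr rfl e2, ← Finset.smul_sum,
        HopfAlgebra.sum_antipode_mul_eq_smul (rg i), smul_smul]
    rw [Finset.sum_congr rfl e1]
    have e3 : ∑ i ∈ s, (Φ (S (f i)) * Coalgebra.counit (R := ℂ) (g i)) • (1 : B)
        = (Φ ∘ₗ S) (∑ i ∈ s, Coalgebra.counit (R := ℂ) (g i) • f i) • (1 : B) := by
      rw [map_sum, Finset.sum_smul]
      refine Finset.sum_congr rfl fun i _ => ?_
      rw [map_smul]
      rw [smul_eq_mul, mul_comm]
      rfl
    rw [e3, CBAux.sum_counit_right_smul _ _ _ h]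
    rfl
  rw [← eval1, eval2]

/-- A normalized right integral on a Hopf algebra is also a left integral. -/
lemma CBAux.left_of_right (Φ : B →ₗ[ℂ] ℂ) (h1 : Φ 1 = 1)
    (hr : ∀ (m : B) {ι : Type} (s : Finset ι) (f g : ι → B),
      Coalgebra.comul (R := ℂ) m = ∑ i ∈ s, f i ⊗ₜ[ℂ] g i →
      ∑ i ∈ s, Φ (g i) • f i = Φ m • (1 : B))
    (m : B) {ι : Type} (s : Finset ι) (f g : ι → B)
    (h : Coalgebra.comul (R := ℂ) m = ∑ i ∈ s, f i ⊗ₜ[ℂ] g i) :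
    ∑ i ∈ s, Φ (f i) • g i = Φ m • (1 : B) := by
  classical
  set S := HopfAlgebra.antipode (R := ℂ) (A := B) with hS
  have key : ∀ v : B, Φ (S v) = Φ v := by
    intro v
    obtain ⟨sv, hsv⟩ := TensorProduct.exists_finset (R := ℂ) (Coalgebra.comul (R := ℂ) v)
    have h1' : Φ (S (1 : B)) = 1 := by rw [hS, CBAux.antipode_one']; exact h1
    have hA := hr v sv (fun p => p.1) (fun p => p.2) hsv
    have hB := CBAux.left_int_of_right_int Φ hr v sv (fun p => p.1) (fun p => p.2) hsv
    have hA' := congrArg (Φ ∘ₗ S) hA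
    have hB' := congrArg Φ hB
    simp only [map_sum, map_smul, smul_eq_mul, LinearMap.comp_apply] at hA' hB'
    rw [h1] at hB'
    rw [h1'] at hA'
    rw [mul_one] at hA' hB'
    rw [← hB', ← hA']
    exact Finset.sum_congr rfl fun p _ => mul_comm _ _
  have h2 := CBAux.left_int_of_right_int Φ hr m s f g h
  rw [key m] at h2
  rw [← h2]
  exact Finset.sum_congr rfl fun i _ => by rw [key (f i)]

end CBAux

/-- Let `(A, H, ▶, ρ, χ, ψ)` be a cocycle linked pair of cosemisimple
bialgebras with normal integrals `φ_A` and `φ_H`.  Then the functional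
`Φ(a # x) = φ_A(a) φ_H(x)` on the cocycle bismash product `A^ψ #_χ H` is a normal integral,
hence `A^ψ #_χ H` is cosemisimple. -/
theorem cocycle_bismash_normal_integral
    {A H : Type} [Ring A] [HopfAlgebra ℂ A] [Ring H] [HopfAlgebra ℂ H]
    (tri : H →ₗ[ℂ] A →ₗ[ℂ] A) (rho : H →ₗ[ℂ] H ⊗[ℂ] A)
    (chi : H →ₗ[ℂ] H →ₗ[ℂ] A) (psi : H →ₗ[ℂ] A ⊗[ℂ] A)
    (hclp : IsCocycleLinkedPair A H tri rho chi psi)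
    (φA : A →ₗ[ℂ] ℂ) (hφA : IsNormalIntegral A φA)
    (φH : H →ₗ[ℂ] ℂ) (hφH : IsNormalIntegral H φH)
    (M : Type) [Ring M] [HopfAlgebra ℂ M] (e : A ⊗[ℂ] H ≃ₗ[ℂ] M)
    (hM : IsCocycleBismash A H tri rho chi psi M e) :
    IsNormalIntegral M
      ((LinearMap.mul' ℂ ℂ) ∘ₗ (TensorProduct.map φA φH) ∘ₗ (e.symm : M →ₗ[ℂ] A ⊗[ℂ] H)) := by
  classical
  set Φ : M →ₗ[ℂ] ℂ :=
    (LinearMap.mul' ℂ ℂ) ∘ₗ (TensorProduct.map φA φH) ∘ₗ (e.symm : M →ₗ[ℂ] A ⊗[ℂ] H)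
    with hΦdef
  have Φeval : ∀ (b : A) (y : H), Φ (e (b ⊗ₜ[ℂ] y)) = φA b * φH y := by
    intro b y
    simp [hΦdef, LinearMap.mul'_apply]
  have Φone : Φ (1 : M) = 1 := by
    rw [hM.one_def, Φeval, hφA.1, hφH.1, one_mul]
  -- the main computation : the right-integral property of Φ
  have key : ∀ w : A ⊗[ℂ] H,
      (TensorProduct.rid ℂ M) ((LinearMap.lTensor M Φ) (Coalgebra.comul (R := ℂ) (e w)))
        = Φ (e w) • (1 : M) := by
    intro w
    induction w using TensorProduct.induction_on with
    | zero => simp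
    | add w1 w2 ih1 ih2 =>
        simp only [map_add, ih1, ih2, add_smul]
    | tmul a x =>
        obtain ⟨sa, hsa⟩ := TensorProduct.exists_finset (R := ℂ) (Coalgebra.comul (R := ℂ) a)
        have rx : Coalgebra.Repr ℂ x (H × H) := ℛ ℂ x
        have rl : ∀ i, Coalgebra.Repr ℂ (rx.left i) (H × H) := fun i => ℛ ℂ (rx.left i)
        -- pure-tensor representations of the values of psi and rho
        set Fψ : (i : rx.ι) → (rl i).ι → Finset (A × A) := fun i k =>
          (TensorProduct.exists_finset (R := ℂ) (psi ((rl i).left k))).choose with hFψdef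
        have hFψ : ∀ i k, psi ((rl i).left k) = ∑ p ∈ Fψ i k, p.1 ⊗ₜ[ℂ] p.2 := fun i k =>
          (TensorProduct.exists_finset (R := ℂ) (psi ((rl i).left k))).choose_spec
        set Fρ : (i : rx.ι) → (rl i).ι → Finset (H × A) := fun i k =>
          (TensorProduct.exists_finset (R := ℂ) (rho ((rl i).right k))).choose with hFρdef
        have hFρ : ∀ i k, rho ((rl i).right k) = ∑ p ∈ Fρ i k, p.1 ⊗ₜ[ℂ] p.2 := fun i k =>
          (TensorProduct.exists_finset (R := ℂ) (rho ((rl i).right k))).choose_spec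
        -- flattened index set
        set sW : Finset ((i : rx.ι) × ((k : (rl i).ι) × ((A × A) × (H × A)))) :=
          rx.index.sigma (fun i => (rl i).index.sigma (fun k => (Fψ i k) ×ˢ (Fρ i k)))
          with hsWdef
        set pf : ((i : rx.ι) × ((k : (rl i).ι) × ((A × A) × (H × A)))) → A :=
          fun t => t.2.2.1.1 with hpf
        set qf : ((i : rx.ι) × ((k : (rl i).ι) × ((A × A) × (H × A)))) → A :=
          fun t => t.2.2.1.2 with hqf
        set gf : ((i : rx.ι) × ((k : (rl i).ι) × ((A × A) × (H × A)))) → H :=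
          fun t => t.2.2.2.1 with hgf
        set cf : ((i : rx.ι) × ((k : (rl i).ι) × ((A × A) × (H × A)))) → A :=
          fun t => t.2.2.2.2 with hcf
        set uf : ((i : rx.ι) × ((k : (rl i).ι) × ((A × A) × (H × A)))) → H :=
          fun t => rx.right t.1 with huf
        -- expansion of comul3
        have hW0 : comul3 H x = ∑ i ∈ rx.index, ∑ k ∈ (rl i).index,
            ((rl i).left k ⊗ₜ[ℂ] (rl i).right k) ⊗ₜ[ℂ] rx.right i := by
          show (LinearMap.rTensor H (Coalgebra.comul (R := ℂ)))
            (Coalgebra.comul (R := ℂ) x) = _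
          rw [← rx.eq, map_sum]
          refine Finset.sum_congr rfl fun i _ => ?_
          rw [LinearMap.rTensor_tmul, ← (rl i).eq, TensorProduct.sum_tmul]
        -- the flattened pure representation
        have hW : (TensorProduct.map (TensorProduct.map psi rho) (LinearMap.id : H →ₗ[ℂ] H))
              (comul3 H x)
            = ∑ t ∈ sW, ((pf t ⊗ₜ[ℂ] qf t) ⊗ₜ[ℂ] (gf t ⊗ₜ[ℂ] cf t)) ⊗ₜ[ℂ] uf t := by
          rw [hW0, map_sum, hsWdef, Finset.sum_sigma]
          refine Finset.sum_congr rfl fun i _ => ?_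
          rw [map_sum, Finset.sum_sigma]
          refine Finset.sum_congr rfl fun k _ => ?_
          rw [TensorProduct.map_tmul, TensorProduct.map_tmul, LinearMap.id_coe, id_eq,
            hFψ i k, hFρ i k, Finset.sum_product, TensorProduct.sum_tmul]
          rw [TensorProduct.sum_tmul]
          refine Finset.sum_congr rfl fun y _ => ?_
          rw [TensorProduct.tmul_sum, TensorProduct.sum_tmul]
        have hcm := hM.comul_def a x sW sa (fun j => j.1) (fun j => j.2) pf qf gf cf uf
          hsa hW
        -- push the fold through the double sum
        have hLHS : (TensorProduct.rid ℂ M) ((LinearMap.lTensor M Φ)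
              (Coalgebra.comul (R := ℂ) (e (a ⊗ₜ[ℂ] x))))
            = ∑ j ∈ sa, ∑ t ∈ sW,
                Φ (e ((j.2 * qf t * cf t) ⊗ₜ[ℂ] uf t)) • e ((j.1 * pf t) ⊗ₜ[ℂ] gf t) := by
          rw [hcm, map_sum, map_sum]
          refine Finset.sum_congr rfl fun j _ => ?_
          rw [map_sum, map_sum]
          refine Finset.sum_congr rfl fun t _ => ?_
          rw [LinearMap.lTensor_tmul, TensorProduct.rid_tmul]
        -- the folding maps
        set κ1 : (((A ⊗[ℂ] A) ⊗[ℂ] (H ⊗[ℂ] A)) ⊗[ℂ] H) →ₗ[ℂ] ((A ⊗[ℂ] A) ⊗[ℂ] (H ⊗[ℂ] A)) :=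
          (TensorProduct.rid ℂ ((A ⊗[ℂ] A) ⊗[ℂ] (H ⊗[ℂ] A))).toLinearMap ∘ₗ
            (LinearMap.lTensor ((A ⊗[ℂ] A) ⊗[ℂ] (H ⊗[ℂ] A)) φH) with hκ1
        have κ1_apply : ∀ (P : (A ⊗[ℂ] A) ⊗[ℂ] (H ⊗[ℂ] A)) (u : H),
            κ1 (P ⊗ₜ[ℂ] u) = φH u • P := by
          intro P u; simp [hκ1]
        set G : (A × A) → ((A ⊗[ℂ] A) ⊗[ℂ] (H ⊗[ℂ] A)) →ₗ[ℂ] M := fun j =>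
          (TensorProduct.rid ℂ M).toLinearMap ∘ₗ
            (TensorProduct.map (e : A ⊗[ℂ] H →ₗ[ℂ] M) (φA ∘ₗ LinearMap.mul' ℂ A)) ∘ₗ
            (TensorProduct.tensorTensorTensorComm ℂ A A H A).toLinearMap ∘ₗ
            (TensorProduct.map
              (TensorProduct.map (LinearMap.mulLeft ℂ j.1) (LinearMap.mulLeft ℂ j.2))
              (LinearMap.id (R := ℂ) (M := H ⊗[ℂ] A))) with hG
        have G_apply : ∀ (j : A × A) (p q : A) (g : H) (c : A),
            G j ((p ⊗ₜ[ℂ] q) ⊗ₜ[ℂ] (g ⊗ₜ[ℂ] c))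
              = φA (j.2 * q * c) • e ((j.1 * p) ⊗ₜ[ℂ] g) := by
          intro j p q g c
          simp [hG, TensorProduct.tensorTensorTensorComm_tmul, LinearMap.mul'_apply,
            mul_assoc]
        -- the inner sum is G j applied to the folded element
        have inner_eq : ∀ j : A × A,
            ∑ t ∈ sW, Φ (e ((j.2 * qf t * cf t) ⊗ₜ[ℂ] uf t)) • e ((j.1 * pf t) ⊗ₜ[ℂ] gf t)
            = G j (κ1 ((TensorProduct.map (TensorProduct.map psi rho)
                (LinearMap.id : H →ₗ[ℂ] H)) (comul3 H x))) := by
          intro j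
          rw [hW, map_sum, map_sum]
          refine Finset.sum_congr rfl fun t _ => ?_
          rw [κ1_apply, map_smul, G_apply, Φeval, smul_smul, mul_comm]
        -- compute the folded element
        have κ1W : κ1 ((TensorProduct.map (TensorProduct.map psi rho)
              (LinearMap.id : H →ₗ[ℂ] H)) (comul3 H x))
            = φH x • (((1 : A) ⊗ₜ[ℂ] (1 : A)) ⊗ₜ[ℂ] ((1 : H) ⊗ₜ[ℂ] (1 : A))) := by
          rw [hW0, map_sum, map_sum]
          have e1 : ∀ i ∈ rx.index,
              κ1 ((TensorProduct.map (TensorProduct.map psi rho)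
                (LinearMap.id : H →ₗ[ℂ] H)) (∑ k ∈ (rl i).index,
                  ((rl i).left k ⊗ₜ[ℂ] (rl i).right k) ⊗ₜ[ℂ] rx.right i))
              = φH (rx.right i) • ((TensorProduct.map psi rho) ∘ₗ
                  (Coalgebra.comul (R := ℂ))) (rx.left i) := by
            intro i _
            rw [map_sum, map_sum]
            have e2 : ∀ k ∈ (rl i).index,
                κ1 ((TensorProduct.map (TensorProduct.map psi rho)
                  (LinearMap.id : H →ₗ[ℂ] H))
                    (((rl i).left k ⊗ₜ[ℂ] (rl i).right k) ⊗ₜ[ℂ] rx.right i))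
                = φH (rx.right i) •
                    (psi ((rl i).left k) ⊗ₜ[ℂ] rho ((rl i).right k)) := by
              intro k _
              rw [TensorProduct.map_tmul, TensorProduct.map_tmul, LinearMap.id_coe, id_eq,
                κ1_apply]
            rw [Finset.sum_congr rfl e2, ← Finset.smul_sum]
            congr 1
            rw [LinearMap.comp_apply, ← (rl i).eq, map_sum]
            exact Finset.sum_congr rfl fun k _ => (TensorProduct.map_tmul _ _ _ _).symm
          rw [Finset.sum_congr rfl e1, CBAux.fold_smul_map,
            hφH.2.2 x rx.index rx.left rx.right rx.eq.symm, map_smul]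
          congr 1
          rw [LinearMap.comp_apply, Bialgebra.comul_one, Algebra.TensorProduct.one_def,
            TensorProduct.map_tmul, hclp.c4, hclp.c2]
        -- finish
        rw [hLHS]
        have e4 : ∀ j ∈ sa, ∑ t ∈ sW,
              Φ (e ((j.2 * qf t * cf t) ⊗ₜ[ℂ] uf t)) • e ((j.1 * pf t) ⊗ₜ[ℂ] gf t)
            = φH x • (φA j.2 •
                ((e : A ⊗[ℂ] H →ₗ[ℂ] M) ∘ₗ ((TensorProduct.mk ℂ A H).flip 1)) j.1) := by
          intro j _
          rw [inner_eq j, κ1W, map_smul, G_apply, mul_one, mul_one, mul_one]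
          simp only [LinearMap.comp_apply, TensorProduct.mk_apply, LinearMap.flip_apply,
            LinearEquiv.coe_coe]
        rw [Finset.sum_congr rfl e4, ← Finset.smul_sum, CBAux.fold_smul_map,
          hφA.2.2 a sa (fun j => j.1) (fun j => j.2) hsa, map_smul]
        simp only [LinearMap.comp_apply, TensorProduct.mk_apply, LinearMap.flip_apply,
          LinearEquiv.coe_coe]
        rw [Φeval, hM.one_def, smul_smul, mul_comm]
  -- Φ is a right integral
  have hr : ∀ (m : M) {ι : Type} (s : Finset ι) (f g : ι → M),
      Coalgebra.comul (R := ℂ) m = ∑ i ∈ s, f i ⊗ₜ[ℂ] g i →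
      ∑ i ∈ s, Φ (g i) • f i = Φ m • (1 : M) := by
    intro m ι s f g h
    have h2 : ∑ i ∈ s, Φ (g i) • f i
        = (TensorProduct.rid ℂ M) ((LinearMap.lTensor M Φ)
            (Coalgebra.comul (R := ℂ) m)) := by
      rw [h, map_sum, map_sum]
      refine Finset.sum_congr rfl fun i _ => ?_
      rw [LinearMap.lTensor_tmul, TensorProduct.rid_tmul]
    have h3 := key (e.symm m)
    rw [e.apply_symm_apply] at h3
    rw [h2, h3]
  refine ⟨Φone, ?_, ?_⟩
  · intro x ι s x1 x2 hrep
    exact CBAux.left_of_right Φ Φone hr x s x1 x2 hrep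
  · intro x ι s x1 x2 hrep
    exact hr x s x1 x2 hrep
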